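/- Let t ≥ 2 and let G be a 2-ichromatic ordered graph with parts v_1, ..., v_m and v_{m+1}, ..., v_{m+n} such that v_1 v_{m+1}, v_m v_{m+n}, and v_m v_{m+1} are edges of G. Then R_t(G) ≥ (2t+1)r + 1, where r = min(m,n) - 1. -/

import Mathlib

/-- A `t`-edge-coloring `c` of the complete graph on the ordered vertex set `Fin N`
contains a monochromatic ordered copy of the ordered graph `G` on `Fin M`. -/
def HasMonoCopy {M N t : ℕ} (G : SimpleGraph (Fin M)) (c : Fin N → Fin N → Fin t) : Prop :=
  ∃ k : Fin t, ∃ f : Fin M → Fin N, StrictMono f ∧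
    ∀ u v : Fin M, u < v → G.Adj u v → c (f u) (f v) = k

/-- The `t`-color ordered Ramsey number of the ordered graph `G`: the least `N` such that
every `t`-coloring of the edges of the complete graph on `Fin N` contains a monochromatic
ordered copy of `G`. -/
noncomputable def orderedRamsey {M : ℕ} (t : ℕ) (G : SimpleGraph (Fin M)) : ℕ :=
  sInf {N : ℕ | ∀ c : Fin N → Fin N → Fin t, HasMonoCopy G c}

/-- An interval coloring of an ordered graph with `k` parts, encoded as a monotone
surjection onto `Fin k` whose fibers (the parts, which are intervals of consecutive
vertices) are independent sets. -/
def IsIntervalColoring {N k : ℕ} (G : SimpleGraph (Fin N)) (p : Fin N → Fin k) : Prop :=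
  Monotone p ∧ Function.Surjective p ∧ ∀ u v : Fin N, G.Adj u v → p u ≠ p v

/-- The interval chromatic number of an ordered graph. -/
noncomputable def intervalChromatic {N : ℕ} (G : SimpleGraph (Fin N)) : ℕ :=
  sInf {k : ℕ | ∃ p : Fin N → Fin k, IsIntervalColoring G p}

/-! ### Auxiliary: triangle coloring for the lower-bound construction -/

/-- Base coloring of the side-5 triangle with 2 colors. -/
def tribase (i j : ℕ) : ℕ :=
  if j = 1 then (if i = 0 then 0 else 1)
  else if j = 2 then (if i = 0 then 0 else 1)
  else if j = 3 then (if i ≤ 1 then 1 else 0)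
  else if j = 4 then (if i ≤ 2 then 0 else 1)
  else 0

/-- Coloring of the side-(2t+1) triangle with t colors avoiding monochromatic corners. -/
def trichi (t i j : ℕ) : ℕ :=
  if min i (2 * t - j) + 3 ≤ t then t - 1 - min i (2 * t - j)
  else tribase (i - (t - 2)) (j - (t - 2))

lemma tribase_le_one (i j : ℕ) : tribase i j ≤ 1 := by
  unfold tribase; split_ifs <;> omega

lemma trichi_lt (t i j : ℕ) (ht : 2 ≤ t) : trichi t i j < t := by
  unfold trichi; split_ifs with h
  · omega
  · have := tribase_le_one (i - (t - 2)) (j - (t - 2)); omega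

lemma tribase_corner (u u' v v' : ℕ) (h1 : u < u') (h2 : u' ≤ v) (h3 : v < v')
    (h4 : v' ≤ 4) (e1 : tribase u v = tribase u' v) (e2 : tribase u' v = tribase u' v') :
    False := by
  interval_cases v' <;> interval_cases v <;> interval_cases u' <;> interval_cases u <;>
    simp_all [tribase]

lemma trichi_corner (t i i' j j' : ℕ) (ht : 2 ≤ t) (h1 : i < i') (h2 : i' ≤ j)
    (h3 : j < j') (h4 : j' ≤ 2 * t)
    (e1 : trichi t i j = trichi t i' j) (e2 : trichi t i' j = trichi t i' j') : False := by
  have hb1 := tribase_le_one (i - (t - 2)) (j - (t - 2))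
  have hb2 := tribase_le_one (i' - (t - 2)) (j - (t - 2))
  have hb3 := tribase_le_one (i' - (t - 2)) (j' - (t - 2))
  unfold trichi at e1 e2
  split_ifs at e1 e2 <;>
    first
    | omega
    | exact tribase_corner _ _ _ _ (by omega) (by omega) (by omega) (by omega) e1 e2

/-! ### Auxiliary: multicolor Ramsey-type existence -/

lemma strictMono_fin_gap {M N : ℕ} {f : Fin M → Fin N} (hf : StrictMono f) :
    ∀ d : ℕ, ∀ u v : Fin M, (v : ℕ) = (u : ℕ) + d → (f u : ℕ) + d ≤ (f v : ℕ) := by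
  intro d
  induction d with
  | zero =>
      intro u v h
      have : u = v := Fin.ext (by omega)
      subst this; omega
  | succ d ih =>
      intro u v h
      have hw : (u : ℕ) + d < M := by have := v.isLt; omega
      set w : Fin M := ⟨(u : ℕ) + d, hw⟩
      have h1 := ih u w rfl
      have h2 : w < v := by
        rw [Fin.lt_def]; simp only [w]; omega
      have h3 := hf h2
      rw [Fin.lt_def] at h3
      omega

/-- Tower function for the greedy Ramsey argument. -/
def ramTower (t : ℕ) : ℕ → ℕ
  | 0 => 1
  | L + 1 => t * ramTower t L + 1

lemma ramsey_chain (t : ℕ) (ht : 0 < t) (c : ℕ → ℕ → Fin t) :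
    ∀ (L : ℕ) (s : Finset ℕ), ramTower t L ≤ s.card →
    ∃ (x : Fin L → ℕ) (k : Fin L → Fin t),
      StrictMono x ∧ (∀ i, x i ∈ s) ∧ ∀ i j : Fin L, i < j → c (x i) (x j) = k i := by
  intro L
  induction L with
  | zero =>
      intro s _
      exact ⟨Fin.elim0, Fin.elim0, fun a => a.elim0, fun a => a.elim0, fun a => a.elim0⟩
  | succ L ih =>
      intro s hcard
      simp only [ramTower] at hcard
      have hne : s.Nonempty := Finset.card_pos.mp (by nlinarith [ramTower t L])
      set a := s.min' hne with ha
      have hmm : a ∈ s := s.min'_mem hne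
      set s' := s.erase a with hs'
      have hcard' : (Finset.univ : Finset (Fin t)).card * ramTower t L ≤ s'.card := by
        have h1 : s'.card = s.card - 1 := Finset.card_erase_of_mem hmm
        simp only [Finset.card_univ, Fintype.card_fin]
        omega
      obtain ⟨k0, -, hk0⟩ := Finset.exists_le_card_fiber_of_mul_le_card_of_maps_to
        (f := fun y => c a y) (fun y _ => Finset.mem_univ _)
        ⟨⟨0, ht⟩, Finset.mem_univ _⟩ hcard'
      obtain ⟨x', k', hmono, hmem, hcol⟩ := ih (s'.filter fun y => c a y = k0) hk0
      have hmem' : ∀ i, x' i ∈ s' ∧ c a (x' i) = k0 := by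
        intro i
        have := hmem i
        simpa [Finset.mem_filter] using this
      have hlt : ∀ i, a < x' i := by
        intro i
        obtain ⟨h1, -⟩ := hmem' i
        have h2 : x' i ∈ s := Finset.mem_of_mem_erase h1
        have h3 : x' i ≠ a := Finset.ne_of_mem_erase h1
        have h4 := s.min'_le (x' i) h2
        omega
      refine ⟨Fin.cons a x', Fin.cons k0 k', ?_, ?_, ?_⟩
      · intro u v huv
        induction u using Fin.cases with
        | zero =>
            induction v using Fin.cases with
            | zero => exact absurd huv (lt_irrefl _)
            | succ vj => simpa using hlt vj
        | succ ui =>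
            induction v using Fin.cases with
            | zero => exact absurd huv (by simp [Fin.lt_def])
            | succ vj =>
                simp only [Fin.cons_succ]
                exact hmono (by simpa [Fin.succ_lt_succ_iff] using huv)
      · intro i
        induction i using Fin.cases with
        | zero => simpa using hmm
        | succ ij =>
            simp only [Fin.cons_succ]
            exact Finset.mem_of_mem_erase (hmem' ij).1
      · intro i j hij
        induction i using Fin.cases with
        | zero =>
            induction j using Fin.cases with
            | zero => exact absurd hij (lt_irrefl _)
            | succ jj =>
                simp only [Fin.cons_succ, Fin.cons_zero]
                exact (hmem' jj).2
        | succ ii =>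
            induction j using Fin.cases with
            | zero => exact absurd hij (by simp [Fin.lt_def])
            | succ jj =>
                simp only [Fin.cons_succ]
                exact hcol ii jj (by simpa [Fin.succ_lt_succ_iff] using hij)

lemma ramsey_exists {M t : ℕ} (ht : 0 < t) (G : SimpleGraph (Fin M)) :
    ∃ N, ∀ c : Fin N → Fin N → Fin t, HasMonoCopy G c := by
  refine ⟨ramTower t (t * M), fun c => ?_⟩
  let N := ramTower t (t * M)
  let c' : ℕ → ℕ → Fin t := fun x y =>
    if h : x < N ∧ y < N then c ⟨x, h.1⟩ ⟨y, h.2⟩ else ⟨0, ht⟩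
  obtain ⟨x, k, hmono, hmem, hcol⟩ :=
    ramsey_chain t ht c' (t * M) (Finset.range N) (by simp [N])
  have hmemN : ∀ i, x i < N := by
    intro i; have := hmem i; simpa [Finset.mem_range] using this
  obtain ⟨k0, -, hk0⟩ := Finset.exists_le_card_fiber_of_mul_le_card_of_maps_to
      (s := (Finset.univ : Finset (Fin (t * M)))) (f := k) (n := M)
      (fun i _ => Finset.mem_univ _) ⟨⟨0, ht⟩, Finset.mem_univ _⟩
      (by simp [Finset.card_univ])
  obtain ⟨F', hsub, hFcard⟩ := Finset.exists_subset_card_eq hk0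
  set e := F'.orderEmbOfFin hFcard with he
  have hF' : ∀ i : Fin M, k (e i) = k0 := by
    intro i
    have h1 : e i ∈ F' := F'.orderEmbOfFin_mem hFcard i
    have h2 := hsub h1
    simpa [Finset.mem_filter] using h2
  refine ⟨k0, fun i => ⟨x (e i), hmemN (e i)⟩, ?_, ?_⟩
  · intro u v huv
    rw [Fin.lt_def]
    exact hmono (e.strictMono huv)
  · intro u v huv _
    have h1 : e u < e v := e.strictMono huv
    have h2 := hcol (e u) (e v) h1
    have h3 : c' (x (e u)) (x (e v)) =
        c ⟨x (e u), hmemN (e u)⟩ ⟨x (e v), hmemN (e v)⟩ :=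
      dif_pos ⟨hmemN (e u), hmemN (e v)⟩
    show c ⟨x (e u), hmemN (e u)⟩ ⟨x (e v), hmemN (e v)⟩ = k0
    rw [← h3, h2, hF']

/-- For `t ≥ 2`, if `G` is a 2-ichromatic ordered graph with parts `v_1,…,v_m` and
`v_{m+1},…,v_{m+n}` having edges `v_1 v_{m+1}`, `v_m v_{m+n}`, and `v_m v_{m+1}`,
then `R_t(G) ≥ (2t+1)r + 1` where `r = min(m,n) - 1`. -/
theorem stmt11 {m n t : ℕ} (ht : 2 ≤ t) (hm : 1 ≤ m) (hn : 1 ≤ n)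
    (G : SimpleGraph (Fin (m + n)))
    (hichrom : intervalChromatic G = 2)
    (hpart1 : ∀ u v : Fin (m + n), (u : ℕ) < m → (v : ℕ) < m → ¬ G.Adj u v)
    (hpart2 : ∀ u v : Fin (m + n), m ≤ (u : ℕ) → m ≤ (v : ℕ) → ¬ G.Adj u v)
    (hedge1 : G.Adj ⟨0, by omega⟩ ⟨m, by omega⟩)
    (hedge2 : G.Adj ⟨m - 1, by omega⟩ ⟨m + n - 1, by omega⟩)
    (hedge3 : G.Adj ⟨m - 1, by omega⟩ ⟨m, by omega⟩) :
    (2 * t + 1) * (min m n - 1) + 1 ≤ orderedRamsey t G := by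
  set r := min m n - 1 with hr
  obtain ⟨N₀, hN₀⟩ := ramsey_exists (M := m + n) (t := t) (by omega) G
  have hmem₀ : N₀ ∈ {N : ℕ | ∀ c : Fin N → Fin N → Fin t, HasMonoCopy G c} := hN₀
  rw [orderedRamsey]
  apply le_csInf ⟨N₀, hmem₀⟩
  intro N hN
  by_contra hlt
  push_neg at hlt
  have hNle : N ≤ (2 * t + 1) * r := by omega
  simp only [Set.mem_setOf_eq] at hN
  rcases Nat.eq_zero_or_pos r with hr0 | hr0
  · -- r = 0 : then N = 0 and no map Fin (m+n) → Fin 0 exists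
    have hN0 : N = 0 := by
      rw [hr0] at hNle; simpa using hNle
    subst hN0
    obtain ⟨k, f, -, -⟩ := hN (fun _ _ => ⟨0, by omega⟩)
    exact (f ⟨0, by omega⟩).elim0
  · -- main construction
    set c : Fin N → Fin N → Fin t := fun x y =>
      ⟨trichi t ((x : ℕ) / r) ((y : ℕ) / r), trichi_lt _ _ _ ht⟩ with hc
    obtain ⟨k, f, hf, hcopy⟩ := hN c
    set u0 : Fin (m + n) := ⟨0, by omega⟩
    set u1 : Fin (m + n) := ⟨m - 1, by omega⟩
    set v0 : Fin (m + n) := ⟨m, by omega⟩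
    set v1 : Fin (m + n) := ⟨m + n - 1, by omega⟩
    have e1 := hcopy u0 v0 (by rw [Fin.lt_def]; simp [u0, v0]; omega) hedge1
    have e3 := hcopy u1 v0 (by rw [Fin.lt_def]; simp [u1, v0]; omega) hedge3
    have e2 := hcopy u1 v1 (by rw [Fin.lt_def]; simp [u1, v1]; omega) hedge2
    set a : ℕ := (f u0 : ℕ)
    set a' : ℕ := (f u1 : ℕ)
    set b : ℕ := (f v0 : ℕ)
    set b' : ℕ := (f v1 : ℕ)
    have hga : a + (m - 1) ≤ a' := strictMono_fin_gap hf (m - 1) u0 u1 (by simp [u0, u1])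
    have hgb : b + (n - 1) ≤ b' := strictMono_fin_gap hf (n - 1) v0 v1 (by simp [v0, v1]; omega)
    have hab : a' < b := by
      have : u1 < v0 := by rw [Fin.lt_def]; simp [u1, v0]; omega
      have := hf this
      rw [Fin.lt_def] at this
      exact this
    have hbN : b' < N := (f v1).isLt
    have hrm : r ≤ m - 1 := by omega
    have hrn : r ≤ n - 1 := by omega
    -- block indices
    have hi : a / r < a' / r := by
      have h1 : (a + r) / r ≤ a' / r := Nat.div_le_div_right (by omega)
      rw [Nat.add_div_right _ hr0] at h1
      omega
    have hij : a' / r ≤ b / r := Nat.div_le_div_right (by omega)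
    have hj : b / r < b' / r := by
      have h1 : (b + r) / r ≤ b' / r := Nat.div_le_div_right (by omega)
      rw [Nat.add_div_right _ hr0] at h1
      omega
    have hj' : b' / r ≤ 2 * t := by
      have h1 : b' / r < 2 * t + 1 := by
        rw [Nat.div_lt_iff_lt_mul hr0]
        omega
      omega
    have q1 : trichi t (a / r) (b / r) = trichi t (a' / r) (b / r) := by
      have := congrArg Fin.val (e1.trans e3.symm)
      simpa [hc] using this
    have q2 : trichi t (a' / r) (b / r) = trichi t (a' / r) (b' / r) := by
      have := congrArg Fin.val (e3.trans e2.symm)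
      simpa [hc] using this
    exact trichi_corner t (a / r) (a' / r) (b / r) (b' / r) ht hi hij hj hj' q1 q2
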